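/- Let T be an n×n matrix of extended energy functions (representing an energy automaton on states {1,…,n}, with T_{ij} labeling the transition from state j to state i), let F = {1,…,k} with k ≤ n be the accepting states, s₀ ≤ n the initial state, and x₀ ∈ [0,∞). Then there exists a finite run from (s₀, x₀) ending in a state of F if, and only if, (Fᵀ T* I^{s₀})(x₀) ≠ ⊥, where T* = sup_{m∈ℕ} Tᵐ (pointwise supremum of matrix powers over the semiring (E, ∨, ∘)), I^{s₀} is the column vector with entry id at position s₀ and the constant-⊥ function elsewhere, and Fᵀ is the row vector with entry id at positions 1,…,k and the constant-⊥ function elsewhere. -/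
import Mathlib


open scoped ENNReal NNReal

/-- `[0,∞]_⊥`: the nonnegative extended reals `[0,∞]` with a bottom element `⊥` adjoined. -/
abbrev EnergyVal : Type := WithBot ℝ≥0∞

noncomputable instance : CompleteLattice EnergyVal :=
  inferInstanceAs (CompleteLattice (WithBot (WithTop ℝ≥0)))

/-- An extended energy function: `f ⊥ = ⊥`, `f x₂ ≥ f x₁ + x₂ - x₁` for `x₁ ≤ x₂`
(with `⊥ + c = ⊥`), and `f ∞ = ∞` unless `f` is constantly `⊥`. -/
def IsEnergyFunction (f : EnergyVal → EnergyVal) : Prop :=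
  f ⊥ = ⊥ ∧
  (∀ x₁ x₂ : ℝ≥0∞, x₁ ≤ x₂ → f ↑x₁ + ↑(x₂ - x₁) ≤ f ↑x₂) ∧
  ((∀ x, f x = ⊥) ∨ f ↑(⊤ : ℝ≥0∞) = ↑(⊤ : ℝ≥0∞))

/-- The constant-`⊥` function `⊥̄`. -/
def bbotFn : EnergyVal → EnergyVal := fun _ => ⊥

open Classical in
/-- The function `⊤̄` with `⊤̄ ⊥ = ⊥` and `⊤̄ x = ∞` for `x ≠ ⊥`. -/
noncomputable def ttopFn : EnergyVal → EnergyVal :=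
  fun x => if x = ⊥ then ⊥ else ↑(⊤ : ℝ≥0∞)

open Classical in
/-- The star of an energy function: `f* ⊥ = ⊥`, `f* x = x` if `f x ≤ x`,
and `f* x = ∞` if `f x > x`. -/
noncomputable def starFn (f : EnergyVal → EnergyVal) : EnergyVal → EnergyVal :=
  fun x => if x = ⊥ then ⊥ else if f x ≤ x then x else ↑(⊤ : ℝ≥0∞)

/-- The omega of an energy function, an element of the semimodule `V`
(Booleans identified with `Prop`): `f^ω x = true` iff `x ≠ ⊥` and `f x ≥ x`. -/
def omegaFn (f : EnergyVal → EnergyVal) : EnergyVal → Prop :=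
  fun x => x ≠ ⊥ ∧ x ≤ f x

/-- Membership in the semimodule `V`: monotone maps `[0,∞]_⊥ → B` with `u ⊥ = false`
(Booleans identified with `Prop`, ordered `false < true`). -/
def IsV (u : EnergyVal → Prop) : Prop := ¬ u ⊥ ∧ Monotone u

/-- Matrix product over the semiring `(E, ∨, ∘)`: `(A B)_{ij} = sup_l A_{il} ∘ B_{lj}`. -/
noncomputable def matMul {n : ℕ} (A B : Fin n → Fin n → EnergyVal → EnergyVal) :
    Fin n → Fin n → EnergyVal → EnergyVal :=
  fun i j x => ⨆ l, A i l (B l j x)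

/-- The identity matrix over `(E, ∨, ∘)`: `id` on the diagonal, `⊥̄` elsewhere. -/
def matId {n : ℕ} : Fin n → Fin n → EnergyVal → EnergyVal :=
  fun i j x => if i = j then x else ⊥

/-- Matrix powers over the semiring `(E, ∨, ∘)`. -/
noncomputable def matPow {n : ℕ} (T : Fin n → Fin n → EnergyVal → EnergyVal) :
    ℕ → Fin n → Fin n → EnergyVal → EnergyVal
  | 0 => matId
  | m + 1 => matMul T (matPow T m)

/-- The star `T* = sup_{m∈ℕ} Tᵐ` (pointwise supremum of matrix powers). -/
noncomputable def matStar {n : ℕ} (T : Fin n → Fin n → EnergyVal → EnergyVal) :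
    Fin n → Fin n → EnergyVal → EnergyVal :=
  fun i j x => ⨆ m : ℕ, matPow T m i j x

/-- The unit vector `I^s`: entry `id` at position `s`, the constant-`⊥` function
elsewhere. -/
def unitVec {n : ℕ} (s : Fin n) : Fin n → EnergyVal → EnergyVal :=
  fun i x => if i = s then x else ⊥

/-- The product `row · A · col` of a row vector, a matrix and a column vector over
the semiring `(E, ∨, ∘)`, as a single energy function. -/
noncomputable def rowMatCol {n : ℕ} (row : Fin n → EnergyVal → EnergyVal)
    (A : Fin n → Fin n → EnergyVal → EnergyVal)
    (col : Fin n → EnergyVal → EnergyVal) : EnergyVal → EnergyVal :=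
  fun x => ⨆ j, ⨆ i, row j (A j i (col i x))

/-- There is a finite run from `(s₀, x₀)` of the energy automaton with transition
matrix `T` (where `T i j` labels the transition from state `j` to state `i`) ending
in one of the accepting states `{0, …, k-1}`. -/
def MatFinAccept {n : ℕ} (T : Fin n → Fin n → EnergyVal → EnergyVal)
    (s₀ : Fin n) (k : ℕ) (x₀ : EnergyVal) : Prop :=
  ∃ (m : ℕ) (σ : ℕ → Fin n) (ξ : ℕ → EnergyVal),
    σ 0 = s₀ ∧ ξ 0 = x₀ ∧
    (∀ t, t < m → ξ (t + 1) = T (σ (t + 1)) (σ t) (ξ t)) ∧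
    (∀ t, t ≤ m → ξ t ≠ ⊥) ∧ (σ m : ℕ) < k

/-- The row vector `Fᵀ` of the accepting states `{0, …, k-1}`: entry `id` at
positions `< k`, the constant-`⊥` function elsewhere. -/
def accVec {n : ℕ} (k : ℕ) : Fin n → EnergyVal → EnergyVal :=
  fun j x => if (j : ℕ) < k then x else ⊥


section Aux

lemma energy_mono {f : EnergyVal → EnergyVal} (hf : IsEnergyFunction f) : Monotone f := by
  intro a b hab
  induction a using WithBot.recBotCoe with
  | bot => simp [hf.1]
  | coe x₁ =>
    induction b using WithBot.recBotCoe with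
    | bot => exact absurd hab (by simp)
    | coe x₂ =>
      have hx : x₁ ≤ x₂ := WithBot.coe_le_coe.mp hab
      refine le_trans ?_ (hf.2.1 x₁ x₂ hx)
      induction (f (↑x₁ : EnergyVal)) using WithBot.recBotCoe with
      | bot => simp
      | coe y =>
        rw [← WithBot.coe_add]
        exact WithBot.coe_le_coe.mpr le_self_add

lemma matPow_bot {n : ℕ} (T : Fin n → Fin n → EnergyVal → EnergyVal)
    (hT : ∀ i j, IsEnergyFunction (T i j)) (m : ℕ) (i j : Fin n) :
    matPow T m i j ⊥ = ⊥ := by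
  have hb : ∀ i j : Fin n, T i j ⊥ = ⊥ := fun i j => (hT i j).1
  induction m generalizing i j with
  | zero => simp [matPow, matId]
  | succ m ih => simp [matPow, matMul, ih, hb]

lemma matStar_bot {n : ℕ} (T : Fin n → Fin n → EnergyVal → EnergyVal)
    (hT : ∀ i j, IsEnergyFunction (T i j)) (i j : Fin n) :
    matStar T i j ⊥ = ⊥ := by
  simp [matStar, matPow_bot T hT]

lemma runAux {n : ℕ} (T : Fin n → Fin n → EnergyVal → EnergyVal)
    (hT : ∀ i j, IsEnergyFunction (T i j)) :
    ∀ (m : ℕ) (j i : Fin n) (x : EnergyVal), matPow T m j i x ≠ ⊥ →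
      ∃ (σ : ℕ → Fin n) (ξ : ℕ → EnergyVal),
        σ 0 = i ∧ ξ 0 = x ∧ σ m = j ∧ ξ m = matPow T m j i x ∧
        (∀ t, t < m → ξ (t + 1) = T (σ (t + 1)) (σ t) (ξ t)) ∧
        (∀ t, t ≤ m → ξ t ≠ ⊥) := by
  intro m
  induction m with
  | zero =>
    intro j i x h
    have hji : j = i := by
      by_contra hne
      exact h (by simp [matPow, matId, hne])
    subst hji
    exact ⟨fun _ => j, fun _ => x, rfl, rfl, rfl, by simp [matPow, matId],
      fun t ht => absurd ht (by omega), fun t _ => by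
        simpa [matPow, matId] using h⟩
  | succ m ih =>
    intro j i x h
    have hnem : Nonempty (Fin n) := ⟨j⟩
    obtain ⟨l, hl⟩ := Finite.exists_max (fun l => T j l (matPow T m l i x))
    have hdef : matPow T (m + 1) j i x = ⨆ l, T j l (matPow T m l i x) := rfl
    have heq : matPow T (m + 1) j i x = T j l (matPow T m l i x) := by
      rw [hdef]
      exact le_antisymm (iSup_le hl) (le_iSup (fun l => T j l (matPow T m l i x)) l)
    have hTl : T j l (matPow T m l i x) ≠ ⊥ := heq ▸ h
    have hpl : matPow T m l i x ≠ ⊥ := fun hb => hTl (by rw [hb]; exact (hT j l).1)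
    obtain ⟨σ, ξ, hσ0, hξ0, hσm, hξm, hstep, hnb⟩ := ih l i x hpl
    refine ⟨fun t => if t ≤ m then σ t else j,
      fun t => if t ≤ m then ξ t else T j l (matPow T m l i x), ?_, ?_, ?_, ?_, ?_, ?_⟩
    · simp [hσ0]
    · simp [hξ0]
    · simp only [if_neg (Nat.not_succ_le_self m)]
    · simp only [if_neg (Nat.not_succ_le_self m)]; exact heq.symm
    · intro t ht
      by_cases htm : t < m
      · simp only [if_pos (by omega : t ≤ m), if_pos (by omega : t + 1 ≤ m)]
        exact hstep t htm
      · have hteq : t = m := by omega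
        subst hteq
        simp only [if_pos le_rfl, if_neg (Nat.not_succ_le_self t)]
        rw [hσm, hξm]
    · intro t ht
      by_cases htm : t ≤ m
      · simp only [if_pos htm]; exact hnb t htm
      · simp only [if_neg htm]; exact hTl

end Aux

/-- Reachability via the Kleene star: there is a finite run from `(s₀, x₀)` ending
in an accepting state if, and only if, `(Fᵀ T* I^{s₀}) x₀ ≠ ⊥`. -/
theorem stmt17 {n : ℕ} (T : Fin n → Fin n → EnergyVal → EnergyVal)
    (hT : ∀ i j, IsEnergyFunction (T i j)) (k : ℕ) (hk : k ≤ n) (s₀ : Fin n)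
    (x₀ : ℝ≥0∞) (hx₀ : x₀ ≠ ⊤) :
    MatFinAccept T s₀ k ↑x₀ ↔
      rowMatCol (accVec k) (matStar T) (unitVec s₀) ↑x₀ ≠ ⊥ := by
  constructor
  · rintro ⟨m, σ, ξ, hσ0, hξ0, hstep, hnb, hacc⟩
    have key : ∀ t, t ≤ m → ξ t ≤ matPow T t (σ t) s₀ ↑x₀ := by
      intro t
      induction t with
      | zero => intro _; simp [hξ0, hσ0, matPow, matId]
      | succ t iht =>
        intro ht
        have h1 := iht (Nat.le_of_succ_le ht)
        rw [hstep t (by omega)]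
        calc T (σ (t + 1)) (σ t) (ξ t)
            ≤ T (σ (t + 1)) (σ t) (matPow T t (σ t) s₀ ↑x₀) :=
              energy_mono (hT _ _) h1
          _ ≤ ⨆ l, T (σ (t + 1)) l (matPow T t l s₀ ↑x₀) :=
              le_iSup (fun l => T (σ (t + 1)) l (matPow T t l s₀ (↑x₀ : EnergyVal))) (σ t)
          _ = matPow T (t + 1) (σ (t + 1)) s₀ ↑x₀ := rfl
    have h2 : matPow T m (σ m) s₀ ↑x₀ ≠ ⊥ := fun hb =>
      hnb m le_rfl (le_bot_iff.mp (hb ▸ key m le_rfl))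
    have h3' : matStar T (σ m) s₀ (↑x₀ : EnergyVal) ≠ ⊥ := by
      intro hb
      apply h2
      refine le_bot_iff.mp ?_
      rw [← hb]
      simp only [matStar]
      exact le_iSup (fun m' => matPow T m' (σ m) s₀ (↑x₀ : EnergyVal)) m
    have h3 : accVec (n := n) k (σ m) (matStar T (σ m) s₀ (unitVec s₀ s₀ ↑x₀)) ≠ ⊥ := by
      simpa [accVec, unitVec, hacc] using h3' 
    intro hb
    apply h3
    refine le_bot_iff.mp ?_
    rw [← hb]
    simp only [rowMatCol]
    exact le_trans
      (le_iSup (fun i => accVec (n := n) k (σ m) (matStar T (σ m) i (unitVec s₀ i (↑x₀ : EnergyVal)))) s₀)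
      (le_iSup (fun j => ⨆ i, accVec (n := n) k j (matStar T j i (unitVec s₀ i (↑x₀ : EnergyVal)))) (σ m))
  · intro h
    simp only [rowMatCol, ne_eq, iSup_eq_bot, not_forall] at h
    obtain ⟨j, i, hji⟩ := h
    have hjk : (j : ℕ) < k := by
      by_contra hjk
      exact hji (by simp [accVec, hjk])
    have his : i = s₀ := by
      by_contra his
      apply hji
      simp only [unitVec, if_neg his]
      rw [matStar_bot T hT]
      simp [accVec]
    rw [his] at hji
    have hstar : matStar T j s₀ ↑x₀ ≠ ⊥ := by
      intro hb
      apply hji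
      simp only [unitVec, if_pos rfl, accVec, if_pos hjk]
      exact hb
    have hex : ∃ m, matPow T m j s₀ (↑x₀ : EnergyVal) ≠ ⊥ := by
      by_contra hc
      push_neg at hc
      exact hstar (by simp only [matStar]; simp [hc])
    obtain ⟨m, hm⟩ := hex
    obtain ⟨σ, ξ, hσ0, hξ0, hσm, _, hstep, hnb⟩ := runAux T hT m j s₀ ↑x₀ hm
    exact ⟨m, σ, ξ, hσ0, hξ0, hstep, hnb, by rw [hσm]; exact hjk⟩
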